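/- Every maximal element (under divisibility) of the monomial order ideal SFY of a finite bounded ranked poset P of rank n satisfies: if m = x_{p_k}^{ℓ} · m' is maximal, where p_k has rank k and all variables of m' correspond to elements strictly greater than p_k with deg m' = r, then ℓ = min(n - k - 2r, k - 1). -/

import Mathlib

/-- The rank gap along a chain (with predecessor of the first element being `⊥`, of rank 0). -/
def gap {P : Type} [PartialOrder P] (ρ : P → ℕ) {s : ℕ} (f : Fin s → P) (i : Fin s) : ℕ :=
  ρ (f i) - (if (i : ℕ) = 0 then 0
    else ρ (f ⟨(i : ℕ) - 1, lt_of_le_of_lt (Nat.sub_le _ _) i.2⟩))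

/-- The degree of a monomial. -/
def mdeg {σ : Type} (m : σ →₀ ℕ) : ℕ := m.sum fun _ e => e

/-- `m` is an SFY monomial for the bounded weakly ranked poset `P`. -/
def IsSFY {P : Type} [PartialOrder P] [BoundedOrder P] (ρ : P → ℕ) (m : P →₀ ℕ) : Prop :=
  ∃ (s : ℕ) (f : Fin s → P) (ℓ : Fin s → ℕ),
    (∀ i j : Fin s, i < j → f i < f j) ∧ (∀ i, (⊥ : P) < f i) ∧ (∀ i, f i < (⊤ : P)) ∧
    (∀ i, 1 ≤ ℓ i) ∧ (∀ i, ℓ i < gap ρ f i) ∧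
    (∀ k : Fin s, (ℓ k : ℤ) + 2 * ∑ i ∈ Finset.univ.filter (fun j => k < j), (ℓ i : ℤ)
        ≤ (ρ ⊤ : ℤ) - (ρ (f k) : ℤ)) ∧
    m = ∑ i, Finsupp.single (f i) (ℓ i)

/-- Let `P` be a finite bounded ranked poset of rank `n` and let `m` be a
maximal monomial of `SFY`. Write `m = x_p^ℓ ⬝ m'` where `p` is the minimal element of the
support of `m` (of rank `k = ρ p`, with `ℓ = m p`) and `m'` has degree `r = deg m - ℓ`,
supported on elements strictly greater than `p`. Then `ℓ = min(n - k - 2r, k - 1)`. -/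
theorem stmt19 {P : Type} [Fintype P] [PartialOrder P] [BoundedOrder P]
    (n : ℕ) (ρ : P → ℕ)
    (hcov : ∀ x y : P, x ⋖ y → ρ y = ρ x + 1)
    (hbot : ρ ⊥ = 0) (htop : ρ ⊤ = n)
    (m : P →₀ ℕ) (hm : IsSFY ρ m)
    (hmax : ∀ m' : P →₀ ℕ, IsSFY ρ m' → m ≤ m' → m' = m)
    (p : P) (hp : p ∈ m.support)
    (hmin : ∀ q ∈ m.support, q ≠ p → p < q) :
    (m p : ℤ) = min ((n : ℤ) - (ρ p : ℤ) - 2 * ((mdeg m : ℤ) - (m p : ℤ)))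
      ((ρ p : ℤ) - 1) := by
  classical
  obtain ⟨s, f, ℓ, hfmono, hfbot, hftop, hℓ1, hℓgap, hℓsum, hmeq⟩ := hm
  have hfinj : Function.Injective f := by
    intro i j hij
    by_contra hne
    rcases lt_or_gt_of_ne hne with h | h
    · exact absurd hij (ne_of_lt (hfmono _ _ h))
    · exact absurd hij.symm (ne_of_lt (hfmono _ _ h))
  have happ : ∀ q, m q = ∑ i, if f i = q then ℓ i else 0 := by
    intro q
    rw [hmeq, Finsupp.finset_sum_apply]
    simp [Finsupp.single_apply]
  have happf : ∀ i, m (f i) = ℓ i := by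
    intro i
    rw [happ]
    rw [Finset.sum_eq_single i]
    · simp
    · intro j _ hji
      exact if_neg (hfinj.ne hji)
    · simp
  -- find the index of p
  have hmp : m p ≠ 0 := Finsupp.mem_support_iff.mp hp
  have hex : ∃ i, f i = p := by
    by_contra h
    push_neg at h
    rw [happ p] at hmp
    apply hmp
    apply Finset.sum_eq_zero
    intro i _
    exact if_neg (h i)
  obtain ⟨i₀, hi₀⟩ := hex
  have hs : 0 < s := i₀.pos
  set z : Fin s := ⟨0, hs⟩ with hzdef
  have hfz : f z = p := by
    by_contra hne
    have hi0ne : (i₀ : ℕ) ≠ 0 := by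
      intro h
      exact hne (by rw [← hi₀]; congr 1; exact Fin.ext (by simp [hzdef, h]))
    have hzlt : z < i₀ := by
      rw [Fin.lt_def]
      simp only [hzdef]
      omega
    have h1 : f z < p := hi₀ ▸ hfmono _ _ hzlt
    have h2 : f z ∈ m.support := by
      rw [Finsupp.mem_support_iff, happf]
      exact Nat.one_le_iff_ne_zero.mp (hℓ1 z)
    exact absurd (hmin (f z) h2 hne) (lt_asymm h1)
  have hmdeg : mdeg m = ∑ i, ℓ i := by
    rw [mdeg, Finsupp.sum_fintype _ _ (fun _ => rfl)]
    rw [show (∑ q : P, m q) = ∑ q : P, ∑ i, if f i = q then ℓ i else 0 from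
      Finset.sum_congr rfl fun q _ => happ q]
    rw [Finset.sum_comm]
    exact Finset.sum_congr rfl fun i _ => by
      rw [Finset.sum_ite_eq Finset.univ (f i) (fun _ => ℓ i)]
      simp
  have hfilt : Finset.univ.filter (fun j => z < j) = Finset.univ.erase z := by
    ext j
    simp [Fin.lt_def, Fin.ext_iff, -Fin.val_fin_lt, hzdef]
    omega
  have hsumerase : ∑ i ∈ Finset.univ.filter (fun j => z < j), (ℓ i : ℤ)
      = (∑ i, (ℓ i : ℤ)) - ℓ z := by
    rw [hfilt, Finset.sum_erase_eq_sub (Finset.mem_univ z)]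
  have hgapz : gap ρ f z = ρ p := by
    simp [gap, hfz, hzdef]
    exact congrArg ρ hfz
  have h1 : ℓ z < ρ p := hgapz ▸ hℓgap z
  have h2 : (ℓ z : ℤ) + 2 * ((∑ i, (ℓ i : ℤ)) - ℓ z) ≤ (n : ℤ) - ρ p := by
    have := hℓsum z
    rw [hsumerase, htop, hfz] at this
    exact this
  -- maximality: cannot strictly improve both bounds
  have hkey : ¬((ℓ z : ℤ) < (ρ p : ℤ) - 1 ∧
      (ℓ z : ℤ) < (n : ℤ) - ρ p - 2 * ((∑ i, (ℓ i : ℤ)) - ℓ z)) := by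
    rintro ⟨hlt1, hlt2⟩
    set ℓ' : Fin s → ℕ := fun i => ℓ i + if i = z then 1 else 0 with hℓ'def
    have hsfy : IsSFY ρ (m + Finsupp.single p 1) := by
      refine ⟨s, f, ℓ', hfmono, hfbot, hftop, ?_, ?_, ?_, ?_⟩
      · intro i
        exact le_add_right (hℓ1 i)
      · intro i
        by_cases hiz : i = z
        · subst hiz
          have hv : ℓ' z = ℓ z + 1 := by simp [hℓ'def]
          rw [hv, hgapz]
          omega
        · simpa [hℓ'def, hiz] using hℓgap i
      · intro k
        have hls : ∀ j ∈ Finset.univ.filter (fun j => k < j), (ℓ' j : ℤ) = (ℓ j : ℤ) := by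
          intro j hj
          have hkj : k < j := (Finset.mem_filter.mp hj).2
          have hjz : j ≠ z := by
            intro h
            subst h
            have : (k : ℕ) < 0 := by simpa [Fin.lt_def, hzdef] using hkj
            omega
          simp [hℓ'def, hjz]
        rw [Finset.sum_congr rfl hls]
        by_cases hkz : k = z
        · subst hkz
          rw [hsumerase, htop, hfz]
          simp only [hℓ'def, if_pos rfl]
          push_cast
          linarith
        · simpa [hℓ'def, hkz] using hℓsum k
      · rw [hmeq]
        have : ∀ i : Fin s, Finsupp.single (f i) (ℓ' i)
            = Finsupp.single (f i) (ℓ i) + (if i = z then Finsupp.single (f i) 1 else 0) := by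
          intro i
          by_cases hiz : i = z <;> simp [hℓ'def, hiz, Finsupp.single_add]
        rw [Finset.sum_congr rfl (fun i _ => this i), Finset.sum_add_distrib,
          Finset.sum_ite_eq' Finset.univ z (fun i => Finsupp.single (f i) 1)]
        simp [hfz]
    have hle : m ≤ m + Finsupp.single p 1 := by
      intro q
      simp
    have := hmax _ hsfy hle
    have := DFunLike.congr_fun this p
    simp at this
  have hmpz : m p = ℓ z := by rw [← hfz, happf]
  rw [hmpz, hmdeg]
  push_cast
  omega
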